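/- For any families L, M, N of finite subsets of ℕ, the composition operation on families is associative: (L[M])[N] = L[M[N]]. -/

import Mathlib

noncomputable section

/-- `A < B` for finite sets of naturals: every element of `A` is smaller than every
element of `B` (i.e. `max A < min B`, with the conventions `∅ < B` and `A < ∅`). -/
def finLT (A B : Finset ℕ) : Prop := ∀ a ∈ A, ∀ b ∈ B, a < b

/-- The minimum of a finite set of naturals (`0` if the set is empty; it is only ever
used for nonempty sets). -/
def sMin (A : Finset ℕ) : ℕ := sInf (A : Set ℕ)

/-- The composition `M[N]` of two families of finite subsets of `ℕ`:
all unions `F_1 ∪ ⋯ ∪ F_k` with `F_i ∈ N` nonempty, `F_1 < F_2 < ⋯ < F_k` and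
`{min F_i : i = 1, …, k} ∈ M`. -/
def famComp (M N : Set (Finset ℕ)) : Set (Finset ℕ) :=
  {A | ∃ (k : ℕ) (F : Fin k → Finset ℕ),
        (∀ i, F i ∈ N) ∧ (∀ i, (F i).Nonempty) ∧
        (∀ i j : Fin k, i < j → finLT (F i) (F j)) ∧
        (Finset.univ.image fun i => sMin (F i)) ∈ M ∧
        A = Finset.univ.biUnion F}

namespace FamCompAux

/-- Union of a list of finsets. -/
def U (l : List (Finset ℕ)) : Finset ℕ := l.foldr (· ∪ ·) ∅

/-- The set of minima of a list of finsets. -/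
def mins (l : List (Finset ℕ)) : Finset ℕ := (l.map sMin).toFinset

lemma mem_U {l : List (Finset ℕ)} {x : ℕ} : x ∈ U l ↔ ∃ F ∈ l, x ∈ F := by
  induction l with
  | nil => simp [U]
  | cons a t ih =>
    show x ∈ a ∪ U t ↔ _
    rw [Finset.mem_union, ih]
    constructor
    · rintro (h | ⟨F, hF, hx⟩)
      · exact ⟨a, List.mem_cons_self, h⟩
      · exact ⟨F, List.mem_cons_of_mem a hF, hx⟩
    · rintro ⟨F, hF, hx⟩
      rcases List.mem_cons.mp hF with rfl | hF'
      · exact Or.inl hx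
      · exact Or.inr ⟨F, hF', hx⟩

lemma subset_U {l : List (Finset ℕ)} {F : Finset ℕ} (h : F ∈ l) : F ⊆ U l :=
  fun _ hx => mem_U.mpr ⟨F, h, hx⟩

lemma mem_mins {l : List (Finset ℕ)} {b : ℕ} :
    b ∈ mins l ↔ ∃ F ∈ l, sMin F = b := by simp [mins]

lemma sMin_mem {A : Finset ℕ} (h : A.Nonempty) : sMin A ∈ A := by
  have : (A : Set ℕ).Nonempty := by exact_mod_cast h
  exact_mod_cast Nat.sInf_mem this

lemma sMin_le {A : Finset ℕ} {a : ℕ} (h : a ∈ A) : sMin A ≤ a :=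
  Nat.sInf_le (by exact_mod_cast h)

lemma sMin_eq_of {A B : Finset ℕ} (hBA : B ⊆ A) (hB : sMin A ∈ B) : sMin B = sMin A :=
  le_antisymm (sMin_le hB) (sMin_le (hBA (sMin_mem ⟨_, hB⟩)))

lemma finLT_mono {g g' F F' : Finset ℕ} (hg : g ⊆ F) (hg' : g' ⊆ F')
    (h : finLT F F') : finLT g g' :=
  fun a ha b hb => h a (hg ha) b (hg' hb)

lemma pairwise_or {α : Type*} {R : α → α → Prop} {l : List α} (h : l.Pairwise R)
    {a b : α} (ha : a ∈ l) (hb : b ∈ l) (hab : a ≠ b) : R a b ∨ R b a := by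
  induction l with
  | nil => simp at ha
  | cons c t ih =>
    rcases List.pairwise_cons.mp h with ⟨hc, ht⟩
    rcases List.mem_cons.mp ha with rfl | ha'
    · rcases List.mem_cons.mp hb with rfl | hb'
      · exact absurd rfl hab
      · exact Or.inl (hc _ hb')
    · rcases List.mem_cons.mp hb with rfl | hb'
      · exact Or.inr (hc _ ha')
      · exact ih ht ha' hb'

lemma U_nonempty {l : List (Finset ℕ)} (hl : l ≠ []) (hne : ∀ F ∈ l, F.Nonempty) :
    (U l).Nonempty := by
  cases l with
  | nil => exact absurd rfl hl
  | cons a t =>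
    obtain ⟨x, hx⟩ := hne a List.mem_cons_self
    exact ⟨x, mem_U.mpr ⟨a, List.mem_cons_self, hx⟩⟩

lemma sMin_mins_eq {l : List (Finset ℕ)} (hl : l ≠ []) (hne : ∀ F ∈ l, F.Nonempty) :
    sMin (mins l) = sMin (U l) := by
  have hsub : mins l ⊆ U l := by
    intro b hb
    obtain ⟨F, hF, rfl⟩ := mem_mins.mp hb
    exact subset_U hF (sMin_mem (hne F hF))
  apply sMin_eq_of hsub
  obtain ⟨F, hF, hxF⟩ := mem_U.mp (sMin_mem (U_nonempty hl hne))
  have h1 : sMin F ≤ sMin (U l) := sMin_le hxF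
  have h2 : sMin (U l) ≤ sMin F := sMin_le (subset_U hF (sMin_mem (hne F hF)))
  exact mem_mins.mpr ⟨F, hF, le_antisymm h1 h2⟩

/-- List characterization of `famComp`. -/
lemma mem_famComp_iff {M N : Set (Finset ℕ)} {A : Finset ℕ} :
    A ∈ famComp M N ↔ ∃ l : List (Finset ℕ),
      (∀ F ∈ l, F ∈ N) ∧ (∀ F ∈ l, F.Nonempty) ∧ l.Pairwise finLT ∧
      mins l ∈ M ∧ A = U l := by
  constructor
  · rintro ⟨k, F, h1, h2, h3, h4, h5⟩
    refine ⟨List.ofFn F, ?_, ?_, ?_, ?_, ?_⟩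
    · intro G hG; obtain ⟨i, rfl⟩ := List.mem_ofFn.mp hG; exact h1 i
    · intro G hG; obtain ⟨i, rfl⟩ := List.mem_ofFn.mp hG; exact h2 i
    · exact List.pairwise_ofFn.mpr fun i j hij => h3 i j hij
    · have : mins (List.ofFn F) = Finset.univ.image fun i => sMin (F i) := by
        ext b
        simp only [mem_mins, Finset.mem_image, Finset.mem_univ, true_and]
        constructor
        · rintro ⟨G, hG, rfl⟩
          obtain ⟨i, rfl⟩ := List.mem_ofFn.mp hG; exact ⟨i, rfl⟩
        · rintro ⟨i, rfl⟩
          exact ⟨F i, List.mem_ofFn.mpr ⟨i, rfl⟩, rfl⟩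
      rw [this]; exact h4
    · rw [h5]; ext x
      simp only [Finset.mem_biUnion, Finset.mem_univ, true_and, mem_U]
      constructor
      · rintro ⟨i, hi⟩; exact ⟨F i, List.mem_ofFn.mpr ⟨i, rfl⟩, hi⟩
      · rintro ⟨G, hG, hx⟩
        obtain ⟨i, rfl⟩ := List.mem_ofFn.mp hG; exact ⟨i, hx⟩
  · rintro ⟨l, h1, h2, h3, h4, h5⟩
    refine ⟨l.length, l.get, ?_, ?_, ?_, ?_, ?_⟩
    · intro i; exact h1 _ (l.get_mem ..)
    · intro i; exact h2 _ (l.get_mem ..)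
    · exact fun i j hij => List.pairwise_iff_get.mp h3 i j hij
    · have : (Finset.univ.image fun i => sMin (l.get i)) = mins l := by
        ext b
        simp only [mem_mins, Finset.mem_image, Finset.mem_univ, true_and]
        constructor
        · rintro ⟨i, rfl⟩; exact ⟨l.get i, l.get_mem .., rfl⟩
        · rintro ⟨G, hG, rfl⟩
          obtain ⟨i, rfl⟩ := List.mem_iff_get.mp hG; exact ⟨i, rfl⟩
      rw [this]; exact h4
    · rw [h5]; ext x
      simp only [Finset.mem_biUnion, Finset.mem_univ, true_and, mem_U]
      constructor
      · rintro ⟨G, hG, hx⟩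
        obtain ⟨i, rfl⟩ := List.mem_iff_get.mp hG; exact ⟨i, hx⟩
      · rintro ⟨i, hi⟩; exact ⟨l.get i, l.get_mem .., hi⟩

end FamCompAux

open FamCompAux in
/-- For any families `L, M, N` of finite subsets of `ℕ`,
the composition operation is associative: `(L[M])[N] = L[M[N]]`. -/
theorem famComp_assoc (L M N : Set (Finset ℕ)) :
    famComp (famComp L M) N = famComp L (famComp M N) := by
  ext A
  rw [mem_famComp_iff, mem_famComp_iff]
  constructor
  · -- (L[M])[N] ⊆ L[M[N]]
    rintro ⟨G, hGN, hGne, hGpw, hGmins, rfl⟩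
    rw [mem_famComp_iff] at hGmins
    obtain ⟨H, hHM, hHne, hHpw, hHmins, hminsG⟩ := hGmins
    -- block of G corresponding to B
    set Gf : Finset ℕ → List (Finset ℕ) :=
      fun B => G.filter (fun g => sMin g ∈ B) with hGf
    have hGfmem : ∀ B, ∀ g ∈ Gf B, g ∈ G ∧ sMin g ∈ B := by
      intro B g hg
      rw [hGf, List.mem_filter] at hg
      exact ⟨hg.1, by simpa using hg.2⟩
    have hGfmem' : ∀ B, ∀ g ∈ G, sMin g ∈ B → g ∈ Gf B := by
      intro B g hg hB
      rw [hGf, List.mem_filter]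
      exact ⟨hg, by simpa using hB⟩
    -- mins (Gf B) = B for B ∈ H
    have hminsGf : ∀ B ∈ H, mins (Gf B) = B := by
      intro B hB
      ext b
      rw [mem_mins]
      constructor
      · rintro ⟨g, hg, rfl⟩; exact (hGfmem B g hg).2
      · intro hb
        have : b ∈ mins G := hminsG ▸ subset_U hB hb
        obtain ⟨g, hg, rfl⟩ := mem_mins.mp this
        exact ⟨g, hGfmem' B g hg hb, rfl⟩
    have hGfne : ∀ B ∈ H, Gf B ≠ [] := by
      intro B hB hnil
      obtain ⟨b, hb⟩ := hHne B hB
      rw [← hminsGf B hB, hnil] at hb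
      simp [mins] at hb
    have hGfsubne : ∀ B, ∀ g ∈ Gf B, g.Nonempty := fun B g hg => hGne g (hGfmem B g hg).1
    -- the new outer blocks
    set F : List (Finset ℕ) := H.map (fun B => U (Gf B)) with hF
    have hUGfne : ∀ B ∈ H, (U (Gf B)).Nonempty :=
      fun B hB => U_nonempty (hGfne B hB) (hGfsubne B)
    have hsMinU : ∀ B ∈ H, sMin (U (Gf B)) = sMin B := by
      intro B hB
      rw [← sMin_mins_eq (hGfne B hB) (hGfsubne B), hminsGf B hB]
    refine ⟨F, ?_, ?_, ?_, ?_, ?_⟩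
    · -- each new block is in famComp M N
      intro Fj hFj
      rw [hF, List.mem_map] at hFj
      obtain ⟨B, hB, rfl⟩ := hFj
      rw [mem_famComp_iff]
      refine ⟨Gf B, fun g hg => hGN g (hGfmem B g hg).1, hGfsubne B,
        List.Pairwise.sublist (List.filter_sublist : List.Sublist (G.filter _) G) hGpw, ?_, rfl⟩
      rw [hminsGf B hB]; exact hHM B hB
    · intro Fj hFj
      rw [hF, List.mem_map] at hFj
      obtain ⟨B, hB, rfl⟩ := hFj
      exact hUGfne B hB
    · -- pairwise
      rw [hF]
      refine List.Pairwise.map _ ?_ hHpw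
      intro B B' hBB' x hx y hy
      obtain ⟨g, hg, hxg⟩ := mem_U.mp hx
      obtain ⟨g', hg', hyg'⟩ := mem_U.mp hy
      obtain ⟨hgG, hgB⟩ := hGfmem B g hg
      obtain ⟨hg'G, hg'B⟩ := hGfmem B' g' hg'
      have hlt : sMin g < sMin g' := hBB' _ hgB _ hg'B
      have hne' : g ≠ g' := fun h => by rw [h] at hlt; exact lt_irrefl _ hlt
      rcases pairwise_or hGpw hgG hg'G hne' with h | h
      · exact h x hxg y hyg'
      · exact absurd (h _ (sMin_mem (hGne g' hg'G)) _ (sMin_mem (hGne g hgG)))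
          (not_lt.mpr hlt.le)
    · -- mins F ∈ L
      have : mins F = mins H := by
        rw [hF, mins, mins, List.map_map]
        congr 1
        exact List.map_congr_left fun B hB => hsMinU B hB
      rw [this]; exact hHmins
    · -- union
      ext x
      simp only [mem_U]
      constructor
      · rintro ⟨g, hg, hxg⟩
        have : sMin g ∈ U H := by
          rw [← hminsG]; exact mem_mins.mpr ⟨g, hg, rfl⟩
        obtain ⟨B, hB, hgB⟩ := mem_U.mp this
        refine ⟨U (Gf B), ?_, mem_U.mpr ⟨g, hGfmem' B g hg hgB, hxg⟩⟩
        rw [hF, List.mem_map]; exact ⟨B, hB, rfl⟩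
      · rintro ⟨Fj, hFj, hxFj⟩
        rw [hF, List.mem_map] at hFj
        obtain ⟨B, hB, rfl⟩ := hFj
        obtain ⟨g, hg, hxg⟩ := mem_U.mp hxFj
        exact ⟨g, (hGfmem B g hg).1, hxg⟩
  · -- L[M[N]] ⊆ (L[M])[N]
    rintro ⟨F, hFMN, hFne, hFpw, hFmins, rfl⟩
    classical
    -- choose a witness decomposition for each block
    have hchoice : ∀ Fj : Finset ℕ, ∃ l : List (Finset ℕ),
        (Fj ∈ famComp M N → (∀ g ∈ l, g ∈ N) ∧ (∀ g ∈ l, g.Nonempty) ∧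
          l.Pairwise finLT ∧ mins l ∈ M ∧ Fj = U l) ∧
        (Fj ∉ famComp M N → l = []) := by
      intro Fj
      by_cases h : Fj ∈ famComp M N
      · obtain ⟨l, hl⟩ := mem_famComp_iff.mp h
        exact ⟨l, fun _ => hl, fun h' => absurd h h'⟩
      · exact ⟨[], fun h' => absurd h' h, fun _ => rfl⟩
    choose φ hφin hφout using hchoice
    have hφ : ∀ Fj, ∀ g ∈ φ Fj, g ∈ N ∧ g.Nonempty ∧ g ⊆ Fj := by
      intro Fj g hg
      by_cases h : Fj ∈ famComp M N
      · obtain ⟨h1, h2, h3, h4, h5⟩ := hφin Fj h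
        exact ⟨h1 g hg, h2 g hg, h5 ▸ subset_U hg⟩
      · rw [hφout Fj h] at hg; simp at hg
    have hφ2 : ∀ Fj ∈ famComp M N, (φ Fj).Pairwise finLT ∧ mins (φ Fj) ∈ M ∧
        Fj = U (φ Fj) := by
      intro Fj h
      obtain ⟨_, _, h3, h4, h5⟩ := hφin Fj h
      exact ⟨h3, h4, h5⟩
    have hφne : ∀ Fj ∈ F, φ Fj ≠ [] := by
      intro Fj hFj hnil
      obtain ⟨x, hx⟩ := hFne Fj hFj
      rw [(hφ2 Fj (hFMN Fj hFj)).2.2, hnil] at hx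
      simp [U] at hx
    set G : List (Finset ℕ) := F.flatMap φ with hG
    have hmemG : ∀ g, g ∈ G ↔ ∃ Fj ∈ F, g ∈ φ Fj := by
      intro g; rw [hG, List.mem_flatMap]
    refine ⟨G, ?_, ?_, ?_, ?_, ?_⟩
    · intro g hg
      obtain ⟨Fj, _, hgφ⟩ := (hmemG g).mp hg
      exact (hφ Fj g hgφ).1
    · intro g hg
      obtain ⟨Fj, _, hgφ⟩ := (hmemG g).mp hg
      exact (hφ Fj g hgφ).2.1
    · -- pairwise on the concatenation
      rw [hG, List.flatMap_def, List.pairwise_flatten]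
      constructor
      · intro l hl
        rw [List.mem_map] at hl
        obtain ⟨Fj, hFj, rfl⟩ := hl
        exact (hφ2 Fj (hFMN Fj hFj)).1
      · refine List.Pairwise.map _ ?_ hFpw
        intro Fj Fj' hlt g hg g' hg'
        exact finLT_mono (hφ Fj g hg).2.2 (hφ Fj' g' hg').2.2 hlt
    · -- mins G ∈ famComp L M
      rw [mem_famComp_iff]
      set K : List (Finset ℕ) := F.map (fun Fj => mins (φ Fj)) with hK
      have hsMinK : ∀ Fj ∈ F, sMin (mins (φ Fj)) = sMin Fj := by
        intro Fj hFj
        rw [sMin_mins_eq (hφne Fj hFj) (fun g hg => (hφ Fj g hg).2.1),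
          ← (hφ2 Fj (hFMN Fj hFj)).2.2]
      refine ⟨K, ?_, ?_, ?_, ?_, ?_⟩
      · intro B hB
        rw [hK, List.mem_map] at hB
        obtain ⟨Fj, hFj, rfl⟩ := hB
        exact (hφ2 Fj (hFMN Fj hFj)).2.1
      · intro B hB
        rw [hK, List.mem_map] at hB
        obtain ⟨Fj, hFj, rfl⟩ := hB
        cases h : φ Fj with
        | nil => exact absurd h (hφne Fj hFj)
        | cons a t => exact ⟨sMin a, mem_mins.mpr ⟨a, h ▸ (List.mem_cons_self : a ∈ a :: t), rfl⟩⟩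
      · rw [hK]
        refine List.Pairwise.map _ ?_ hFpw
        intro Fj Fj' hlt x hx y hy
        obtain ⟨g, hg, rfl⟩ := mem_mins.mp hx
        obtain ⟨g', hg', rfl⟩ := mem_mins.mp hy
        exact hlt _ ((hφ Fj g hg).2.2 (sMin_mem (hφ Fj g hg).2.1)) _
          ((hφ Fj' g' hg').2.2 (sMin_mem (hφ Fj' g' hg').2.1))
      · have : mins K = mins F := by
          rw [hK, mins, mins, List.map_map]
          congr 1
          exact List.map_congr_left fun Fj hFj => hsMinK Fj hFj
        rw [this]; exact hFmins
      · ext b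
        rw [mem_mins, mem_U]
        constructor
        · rintro ⟨g, hg, rfl⟩
          obtain ⟨Fj, hFj, hgφ⟩ := (hmemG g).mp hg
          refine ⟨mins (φ Fj), ?_, mem_mins.mpr ⟨g, hgφ, rfl⟩⟩
          rw [hK, List.mem_map]; exact ⟨Fj, hFj, rfl⟩
        · rintro ⟨B, hB, hbB⟩
          rw [hK, List.mem_map] at hB
          obtain ⟨Fj, hFj, rfl⟩ := hB
          obtain ⟨g, hgφ, rfl⟩ := mem_mins.mp hbB
          exact ⟨g, (hmemG g).mpr ⟨Fj, hFj, hgφ⟩, rfl⟩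
    · -- union
      ext x
      simp only [mem_U]
      constructor
      · rintro ⟨Fj, hFj, hxFj⟩
        rw [(hφ2 Fj (hFMN Fj hFj)).2.2] at hxFj
        obtain ⟨g, hgφ, hxg⟩ := mem_U.mp hxFj
        exact ⟨g, (hmemG g).mpr ⟨Fj, hFj, hgφ⟩, hxg⟩
      · rintro ⟨g, hg, hxg⟩
        obtain ⟨Fj, hFj, hgφ⟩ := (hmemG g).mp hg
        exact ⟨Fj, hFj, (hφ Fj g hgφ).2.2 hxg⟩
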